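/- Let π be a probability density on ℝ^{n·t} (the joint state of t labelled targets) and define the symmetrized density π̌(x_{1:t}) = ∑_{p=1}^{t!} π(Γ_p(x_{1:t})), restricted to a fundamental domain (equivalently, the induced density on unordered t-element multisets), where Γ_p ranges over all coordinate-block permutations. Let ν be any density on ℝ^{n·t} and define ν̌ analogously. Then among all densities φ on ℝ^{n·t} satisfying the symmetrization constraint ∑_{p=1}^{t!} φ(Γ_p(x_{1:t})) = π̌(x_{1:t}) for all x_{1:t} (i.e., φ induces the same unlabelled/symmetric density as π), the KL divergence D(φ ‖ ν) is minimized by φ*(x_{1:t}) = (ν(x_{1:t}) / ν̌(x_{1:t})) · π̌(x_{1:t}) (wherever ν̌ > 0). -/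

import Mathlib

open MeasureTheory Real

noncomputable def symmetrize {n t : ℕ} (f : (Fin t → Fin n → ℝ) → ℝ)
    (x : Fin t → Fin n → ℝ) : ℝ :=
  ∑ σ : Equiv.Perm (Fin t), f (x ∘ σ)

section helper
set_option linter.unusedVariables false

lemma piCongrLeft_perm_eq {n t : ℕ} (σ : Equiv.Perm (Fin t))
    (x : Fin t → Fin n → ℝ) :
    (MeasurableEquiv.piCongrLeft (fun _ : Fin t => Fin n → ℝ) σ.symm) x = x ∘ σ := by
  funext j
  have h := Equiv.piCongrLeft_apply_apply (fun _ : Fin t => Fin n → ℝ) σ.symm x (σ j)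
  simp only [MeasurableEquiv.coe_piCongrLeft]
  simpa using h

lemma integrable_comp_perm {n t : ℕ} {F : (Fin t → Fin n → ℝ) → ℝ}
    (hF : Integrable F) (σ : Equiv.Perm (Fin t)) :
    Integrable (fun x => F (x ∘ σ)) := by
  have h := ((volume_measurePreserving_piCongrLeft (fun _ : Fin t => Fin n → ℝ)
    σ.symm).integrable_comp_emb (MeasurableEquiv.measurableEmbedding _)).2 hF
  simpa [Function.comp_def, piCongrLeft_perm_eq] using h

lemma integral_comp_perm {n t : ℕ} (F : (Fin t → Fin n → ℝ) → ℝ)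
    (σ : Equiv.Perm (Fin t)) :
    ∫ x, F (x ∘ σ) = ∫ x, F x := by
  have h := (volume_measurePreserving_piCongrLeft (fun _ : Fin t => Fin n → ℝ)
    σ.symm).integral_comp' F
  simpa [piCongrLeft_perm_eq] using h

lemma symmetrize_comp {n t : ℕ} (f : (Fin t → Fin n → ℝ) → ℝ)
    (σ : Equiv.Perm (Fin t)) (x : Fin t → Fin n → ℝ) :
    symmetrize f (x ∘ σ) = symmetrize f x := by
  unfold symmetrize
  rw [← Equiv.sum_comp (Equiv.mulLeft σ) (fun ρ => f (x ∘ ρ))]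
  rfl

lemma le_symmetrize {n t : ℕ} {f : (Fin t → Fin n → ℝ) → ℝ}
    (hf : ∀ x, 0 ≤ f x) (x : Fin t → Fin n → ℝ) : f x ≤ symmetrize f x := by
  have h := Finset.single_le_sum (f := fun σ : Equiv.Perm (Fin t) => f (x ∘ σ))
    (fun σ _ => hf _) (Finset.mem_univ 1)
  simpa [symmetrize] using h

lemma symmetrize_pos {n t : ℕ} {f : (Fin t → Fin n → ℝ) → ℝ}
    (hf : ∀ x, 0 < f x) (x : Fin t → Fin n → ℝ) : 0 <symmetrize f x :=
  Finset.sum_pos (fun σ _ => hf _) Finset.univ_nonempty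

lemma symmetrize_nonneg {n t : ℕ} {f : (Fin t → Fin n → ℝ) → ℝ}
    (hf : ∀ x, 0 ≤ f x) (x : Fin t → Fin n → ℝ) : 0 ≤ symmetrize f x :=
  Finset.sum_nonneg (fun σ _ => hf _)

/-- The scalar inequality `a log(P/N) + a - ν·(P/N) ≤ a log(a/ν)`. -/
lemma scalar_key {a ν P N : ℝ} (ha : 0 ≤ a) (hν : 0 < ν) (hP : 0 ≤ P) (hN : 0 < N)
    (haP : a ≤ P) :
    a * Real.log (P / N) + a - ν * (P / N) ≤ a * Real.log (a / ν) := by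
  rcases eq_or_lt_of_le ha with h0 | ha
  · have hb : 0 ≤ ν * (P / N) := by positivity
    simp [← h0]
    linarith
  · have hP' : 0 < P := lt_of_lt_of_le ha haP
    have hb : 0 < ν * (P / N) := by positivity
    have h1 : Real.log (ν * (P / N) / a) ≤ ν * (P / N) / a - 1 :=
      Real.log_le_sub_one_of_pos (by positivity)
    have hmul := mul_le_mul_of_nonneg_left h1 ha.le
    have h2 : Real.log (ν * (P / N) / a) = Real.log ν + (Real.log P - Real.log N)
        - Real.log a := by
      rw [Real.log_div (by positivity) ha.ne', Real.log_mul hν.ne' (by positivity),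
        Real.log_div hP'.ne' hN.ne']
    rw [h2] at hmul
    have h6 : a * (ν * (P / N) / a - 1) = ν * (P / N) - a := by
      field_simp
    rw [h6] at hmul
    rw [Real.log_div hP'.ne' hN.ne', Real.log_div ha.ne' hν.ne']
    nlinarith [hmul]

end helper

/-- Theorem 3 of the paper: among all densities `φ` on `(ℝⁿ)ᵗ`
with the same permutation-symmetrization as `π` (here `pd`), the KL divergence
`D(φ‖ν)` is minimized by `φ*(x) = (ν(x)/ν̌(x)) · π̌(x)`. -/
theorem optimal_relabelling_minimizes_kl {n t : ℕ}
    (pd nd fd : (Fin t → Fin n → ℝ) → ℝ)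
    (hp0 : ∀ x, 0 ≤ pd x) (hp1 : ∫ x, pd x = 1)
    (hn0 : ∀ x, 0 < nd x) (hn1 : ∫ x, nd x = 1)
    (hf0 : ∀ x, 0 ≤ fd x) (hf1 : ∫ x, fd x = 1)
    (hcon : ∀ x, symmetrize fd x = symmetrize pd x)
    (hint1 : Integrable (fun x =>
      (nd x / symmetrize nd x * symmetrize pd x) *
        Real.log ((nd x / symmetrize nd x * symmetrize pd x) / nd x)))
    (hint2 : Integrable (fun x => fd x * Real.log (fd x / nd x))) :
    ∫ x, (nd x / symmetrize nd x * symmetrize pd x) *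
        Real.log ((nd x / symmetrize nd x * symmetrize pd x) / nd x)
      ≤ ∫ x, fd x * Real.log (fd x / nd x) := by
  classical
  set B : (Fin t → Fin n → ℝ) → ℝ := fun x =>
    (nd x / symmetrize nd x * symmetrize pd x) *
      Real.log ((nd x / symmetrize nd x * symmetrize pd x) / nd x) with hBdef
  set A : (Fin t → Fin n → ℝ) → ℝ := fun x => fd x * Real.log (fd x / nd x) with hAdef
  have hBc : ∀ σ : Equiv.Perm (Fin t), Integrable (fun x => B (x ∘ σ)) :=
    fun σ => integrable_comp_perm hint1 σ
  have hAc : ∀ σ : Equiv.Perm (Fin t), Integrable (fun x => A (x ∘ σ)) :=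
    fun σ => integrable_comp_perm hint2 σ
  -- the key pointwise inequality between symmetrized integrands
  have key : ∀ x, ∑ σ : Equiv.Perm (Fin t), B (x ∘ σ)
      ≤ ∑ σ : Equiv.Perm (Fin t), A (x ∘ σ) := by
    intro x
    have hN : 0 < symmetrize nd x := symmetrize_pos hn0 x
    have hP : 0 ≤ symmetrize pd x := symmetrize_nonneg hp0 x
    set P := symmetrize pd x with hPdef
    set N := symmetrize nd x with hNdef
    -- value of B on the orbit
    have hBval : ∀ σ : Equiv.Perm (Fin t),
        B (x ∘ σ) = nd (x ∘ σ) * (P / N * Real.log (P / N)) := by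
      intro σ
      have h1 : symmetrize pd (x ∘ σ) = P := symmetrize_comp pd σ x
      have h2 : symmetrize nd (x ∘ σ) = N := symmetrize_comp nd σ x
      have hν : 0 < nd (x ∘ σ) := hn0 _
      have h3 : nd (x ∘ σ) / N * P / nd (x ∘ σ) = P / N := by
        field_simp
      simp only [hBdef, h1, h2, h3]
      ring
    have hsumB : ∑ σ : Equiv.Perm (Fin t), B (x ∘ σ) = P * Real.log (P / N) := by
      rw [Finset.sum_congr rfl (fun σ _ => hBval σ), ← Finset.sum_mul]
      have : ∑ σ : Equiv.Perm (Fin t), nd (x ∘ σ) = N := rfl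
      rw [this]
      field_simp
    have hsumF : ∑ σ : Equiv.Perm (Fin t), fd (x ∘ σ) = P := hcon x
    have hsumN : ∑ σ : Equiv.Perm (Fin t), nd (x ∘ σ) = N := rfl
    -- per-term lower bound for A
    have hterm : ∀ σ : Equiv.Perm (Fin t),
        fd (x ∘ σ) * Real.log (P / N) + fd (x ∘ σ) - nd (x ∘ σ) * (P / N)
          ≤ A (x ∘ σ) := by
      intro σ
      have haP : fd (x ∘ σ) ≤ P := by
        calc fd (x ∘ σ) ≤ symmetrize fd (x ∘ σ) := le_symmetrize hf0 _
          _ = symmetrize fd x := symmetrize_comp fd σ x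
          _ = P := hcon x
      exact scalar_key (hf0 _) (hn0 _) hP hN haP
    calc ∑ σ : Equiv.Perm (Fin t), B (x ∘ σ)
        = P * Real.log (P / N) := hsumB
      _ = ∑ σ : Equiv.Perm (Fin t),
            (fd (x ∘ σ) * Real.log (P / N) + fd (x ∘ σ) - nd (x ∘ σ) * (P / N)) := by
          simp only [Finset.sum_sub_distrib, Finset.sum_add_distrib, ← Finset.sum_mul,
            hsumF, hsumN]
          field_simp
          ring
      _ ≤ ∑ σ : Equiv.Perm (Fin t), A (x ∘ σ) :=
          Finset.sum_le_sum (fun σ _ => hterm σ)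
  have hsum : ∫ x, ∑ σ : Equiv.Perm (Fin t), B (x ∘ σ)
      ≤ ∫ x, ∑ σ : Equiv.Perm (Fin t), A (x ∘ σ) :=
    integral_mono (integrable_finset_sum _ fun σ _ => hBc σ)
      (integrable_finset_sum _ fun σ _ => hAc σ) key
  rw [integral_finset_sum _ (fun σ _ => hBc σ),
      integral_finset_sum _ (fun σ _ => hAc σ)] at hsum
  simp only [integral_comp_perm, Finset.sum_const, nsmul_eq_mul] at hsum
  have hcard : (0 : ℝ) < (Finset.univ : Finset (Equiv.Perm (Fin t))).card := by
    exact_mod_cast Finset.card_pos.2 Finset.univ_nonempty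
  exact le_of_mul_le_mul_left hsum hcard
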